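/- If G is a finite split graph, then G admits a locally irregular total coloring with 2 colors, i.e., tlir(G) ≤ 2. -/

import Mathlib

open Finset
open scoped Classical

variable {V : Type*}

/-- The total degree of a vertex `v` in color `i`, given a vertex coloring `cV` and an
edge coloring `cE` of a graph `G` with `k` colors: the number of edges of color `i`
incident to `v`, plus `1` if `v` itself has color `i`. -/
noncomputable def totalDeg [Fintype V] (G : SimpleGraph V) {k : ℕ}
    (cV : V → Fin k) (cE : Sym2 V → Fin k) (i : Fin k) (v : V) : ℕ :=
  (univ.filter fun u => G.Adj v u ∧ cE s(v, u) = i).card + (if cV v = i then 1 else 0)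

/-- `(cV, cE)` is a locally irregular total coloring of `G`: for every edge `uv`,
the total degrees of `u` and `v` in the color of `uv` are distinct. -/
def IsTLIR [Fintype V] (G : SimpleGraph V) {k : ℕ}
    (cV : V → Fin k) (cE : Sym2 V → Fin k) : Prop :=
  ∀ u v, G.Adj u v →
    totalDeg G cV cE (cE s(u, v)) u ≠ totalDeg G cV cE (cE s(u, v)) v

/-- `G` admits a locally irregular total coloring with `k` colors, i.e. `tlir(G) ≤ k`. -/
def HasTLIR [Fintype V] (G : SimpleGraph V) (k : ℕ) : Prop :=
  ∃ (cV : V → Fin k) (cE : Sym2 V → Fin k), IsTLIR G cV cE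

namespace TLIRSplit

variable [Fintype V] (G : SimpleGraph V) (X : Set V)

/-- The clique as a finset. -/
noncomputable def XF : Finset V := univ.filter (· ∈ X)

/-- Size of the clique. -/
noncomputable def mX : ℕ := (XF X).card

lemma mem_XF {v : V} : v ∈ XF X ↔ v ∈ X := by simp [XF]

/-- Number of neighbours outside `X`. -/
noncomputable def gY (v : V) : ℕ := (univ.filter fun u => G.Adj v u ∧ u ∉ X).card

/-- enumeration of the clique sorted by `gY` ascending. -/
noncomputable def asc : Fin (mX X) → V := fun k =>
  ((Fintype.equivFinOfCardEq (Fintype.card_coe (XF X))).symm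
    (Tuple.sort (fun j => gY G X
      (((Fintype.equivFinOfCardEq (Fintype.card_coe (XF X))).symm j : V))) k) : V)

lemma asc_mono : Monotone fun k => gY G X (asc G X k) :=
  Tuple.monotone_sort fun j => gY G X
      (((Fintype.equivFinOfCardEq (Fintype.card_coe (XF X))).symm j : V))

lemma asc_inj : Function.Injective (asc G X) := by
  intro a b h
  have := Subtype.coe_injective h
  have := (Fintype.equivFinOfCardEq (Fintype.card_coe (XF X))).symm.injective this
  exact (Tuple.sort _).injective this

lemma asc_mem (k : Fin (mX X)) : asc G X k ∈ X := by
  have h : asc G X k ∈ XF X := by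
    unfold asc
    exact ((Fintype.equivFinOfCardEq (Fintype.card_coe (XF X))).symm _).2
  exact (mem_XF X).1 h

/-- position permutation: head (2i<m) reversed, tail shifted. -/
noncomputable def posPerm : Fin (mX X) → Fin (mX X) := fun i =>
  if 2 * (i : ℕ) < mX X then ⟨mX X - 1 - (i : ℕ), by omega⟩
  else ⟨(i : ℕ) - (mX X - mX X / 2), by have := i.2; omega⟩

lemma posPerm_inj : Function.Injective (posPerm X) := by
  intro a b h
  have ha := a.2; have hb := b.2
  by_cases h1 : 2 * (a : ℕ) < mX X <;> by_cases h2 : 2 * (b : ℕ) < mX X <;>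
    simp only [posPerm, h1, h2, if_true, if_false, Fin.mk.injEq] at h <;>
    · apply Fin.ext; omega

/-- the vertex in position `i`. -/
noncomputable def ord : Fin (mX X) → V := fun i => asc G X (posPerm X i)

lemma ord_inj : Function.Injective (ord G X) :=
  fun _ _ h => posPerm_inj X (asc_inj G X h)

lemma ord_mem (i : Fin (mX X)) : ord G X i ∈ X := asc_mem G X _

lemma XF_eq_image : XF X = image (ord G X) univ := by
  apply (eq_of_subset_of_card_le ?_ ?_).symm
  · intro v hv
    obtain ⟨i, -, rfl⟩ := mem_image.1 hv
    exact (mem_XF X).2 (ord_mem G X i)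
  · rw [card_image_of_injective _ (ord_inj G X), card_univ, Fintype.card_fin, mX]

lemma ord_surj {v : V} (hv : v ∈ X) : ∃ i, ord G X i = v := by
  have : v ∈ XF X := (mem_XF X).2 hv
  rw [XF_eq_image G X] at this
  obtain ⟨i, -, h⟩ := mem_image.1 this
  exact ⟨i, h⟩

/-- gY is decreasing on the head. -/
lemma gY_head {i j : Fin (mX X)} (hij : (i : ℕ) ≤ j) (hj : 2 * (j : ℕ) < mX X) :
    gY G X (ord G X j) ≤ gY G X (ord G X i) := by
  have hi : 2 * (i : ℕ) < mX X := by omega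
  have : posPerm X j ≤ posPerm X i := by
    simp only [posPerm, hi, hj, if_true]
    exact Fin.mk_le_mk.2 (by omega)
  exact asc_mono G X this

/-- gY is increasing on the tail. -/
lemma gY_tail {i j : Fin (mX X)} (hij : (i : ℕ) ≤ j) (hi : ¬ 2 * (i : ℕ) < mX X) :
    gY G X (ord G X i) ≤ gY G X (ord G X j) := by
  have hj : ¬ 2 * (j : ℕ) < mX X := by omega
  have : posPerm X i ≤ posPerm X j := by
    simp only [posPerm, hi, hj, if_false]
    exact Fin.mk_le_mk.2 (by omega)
  exact asc_mono G X this

/-- position of a vertex. -/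
noncomputable def pos (v : V) : ℕ :=
  if h : ∃ i, ord G X i = v then ((h.choose : Fin (mX X)) : ℕ) else 0

lemma pos_ord (i : Fin (mX X)) : pos G X (ord G X i) = (i : ℕ) := by
  have h : ∃ j, ord G X j = ord G X i := ⟨i, rfl⟩
  have := h.choose_spec
  have := ord_inj G X this
  simp [pos, dif_pos h, this]

/-- vertex coloring. -/
noncomputable def cV : V → Fin 2 := fun v =>
  if v ∈ X then (if 2 * pos G X v < mX X then 1 else 0)
  else (if mX X % 2 = 0 then 1 else 0)

/-- edge coloring as a two-argument function. -/
noncomputable def cEf : V → V → Fin 2 := fun u v =>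
  if u ∈ X then
    (if v ∈ X then (if mX X ≤ pos G X u + pos G X v then 0 else 1)
     else (if mX X ≤ 2 * pos G X u then 0 else 1))
  else
    (if v ∈ X then (if mX X ≤ 2 * pos G X v then 0 else 1) else 0)

lemma cEf_symm (u v : V) : cEf G X u v = cEf G X v u := by
  by_cases hu : u ∈ X <;> by_cases hv : v ∈ X <;>
    simp [cEf, hu, hv, Nat.add_comm]

/-- edge coloring. -/
noncomputable def cE : Sym2 V → Fin 2 := Sym2.lift ⟨cEf G X, cEf_symm G X⟩

lemma cE_mk (u v : V) : cE G X s(u, v) = cEf G X u v := Sym2.lift_mk ..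

end TLIRSplit

section Counting
open TLIRSplit

/-- cardinality of `{j : Fin m | a ≤ j}`. -/
lemma card_fin_le (m a : ℕ) :
    ((univ : Finset (Fin m)).filter fun j : Fin m => a ≤ (j : ℕ)).card = m - a := by
  have himg : ((univ : Finset (Fin m)).filter fun j : Fin m => a ≤ (j : ℕ)).image Fin.val
      = Finset.Ico a m := by
    ext k
    simp only [mem_image, mem_filter, mem_univ, true_and, Finset.mem_Ico]
    constructor
    · rintro ⟨j, hj, rfl⟩; exact ⟨hj, j.2⟩
    · rintro ⟨h1, h2⟩; exact ⟨⟨k, h2⟩, h1, rfl⟩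
  have := congrArg Finset.card himg
  rwa [card_image_of_injective _ Fin.val_injective, Nat.card_Ico] at this

lemma card_fin_lt (m a : ℕ) (ha : a ≤ m) :
    ((univ : Finset (Fin m)).filter fun j : Fin m => (j : ℕ) < a).card = a := by
  have h : ((univ : Finset (Fin m)).filter fun j : Fin m => a ≤ (j : ℕ)).card
      + ((univ : Finset (Fin m)).filter fun j : Fin m => ¬ a ≤ (j : ℕ)).card
      = (univ : Finset (Fin m)).card :=
    card_filter_add_card_filter_not (fun j : Fin m => a ≤ (j : ℕ))
  have h2 : ((univ : Finset (Fin m)).filter fun j : Fin m => ¬ a ≤ (j : ℕ))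
      = ((univ : Finset (Fin m)).filter fun j : Fin m => (j : ℕ) < a) := by
    apply filter_congr; intro j _; simp [Nat.not_le]
  rw [card_fin_le, h2, card_univ, Fintype.card_fin] at h
  omega

lemma count_color0 {m : ℕ} (i : Fin m) :
    ((univ : Finset (Fin m)).filter fun j : Fin m => j ≠ i ∧ m ≤ (i : ℕ) + (j : ℕ)).card
      = (i : ℕ) - (if m ≤ 2 * (i : ℕ) then 1 else 0) := by
  have hi := i.2
  have hset : ((univ : Finset (Fin m)).filter fun j : Fin m => j ≠ i ∧ m ≤ (i : ℕ) + (j : ℕ))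
      = ((univ : Finset (Fin m)).filter fun j : Fin m => m - (i : ℕ) ≤ (j : ℕ)).erase i := by
    ext j
    simp only [mem_filter, mem_univ, true_and, mem_erase]
    constructor
    · rintro ⟨h1, h2⟩; exact ⟨h1, by omega⟩
    · rintro ⟨h1, h2⟩; exact ⟨h1, by omega⟩
  rw [hset]
  by_cases hm : m ≤ 2 * (i : ℕ)
  · rw [card_erase_of_mem (by simp only [mem_filter, mem_univ, true_and]; omega),
      card_fin_le]
    simp only [hm, if_true]; omega
  · rw [erase_eq_of_notMem (by simp only [mem_filter, mem_univ, true_and]; omega),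
      card_fin_le]
    simp only [hm, if_false]; omega

lemma count_color1 {m : ℕ} (i : Fin m) :
    ((univ : Finset (Fin m)).filter fun j : Fin m => j ≠ i ∧ ¬ m ≤ (i : ℕ) + (j : ℕ)).card
      = (m - (i : ℕ)) - (if 2 * (i : ℕ) < m then 1 else 0) := by
  have hi := i.2
  have hset : ((univ : Finset (Fin m)).filter fun j : Fin m => j ≠ i ∧ ¬ m ≤ (i : ℕ) + (j : ℕ))
      = ((univ : Finset (Fin m)).filter fun j : Fin m => (j : ℕ) < m - (i : ℕ)).erase i := by
    ext j
    simp only [mem_filter, mem_univ, true_and, mem_erase]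
    constructor
    · rintro ⟨h1, h2⟩; exact ⟨h1, by omega⟩
    · rintro ⟨h1, h2⟩; exact ⟨h1, by omega⟩
  rw [hset]
  by_cases hm : 2 * (i : ℕ) < m
  · rw [card_erase_of_mem (by simp only [mem_filter, mem_univ, true_and]; omega),
      card_fin_lt _ _ (by omega)]
    simp only [hm, if_true]
  · rw [erase_eq_of_notMem (by simp only [mem_filter, mem_univ, true_and]; omega),
      card_fin_lt _ _ (by omega)]
    simp only [hm, if_false]; omega

end Counting

namespace TLIRSplit

variable [Fintype V] (G : SimpleGraph V) (X : Set V)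

lemma tdeg_ord0 (hclique : G.IsClique X) (i : Fin (mX X)) :
    totalDeg G (cV G X) (cE G X) 0 (ord G X i)
      = (i : ℕ) + (if mX X ≤ 2 * (i : ℕ) then gY G X (ord G X i) else 0) := by
  classical
  have hxX : ord G X i ∈ X := ord_mem G X i
  unfold totalDeg
  -- split the neighbour count into the part inside X and the part outside X
  have hsplit : (univ.filter fun u => G.Adj (ord G X i) u ∧ cE G X s(ord G X i, u) = 0)
      = ((univ.filter fun u => (G.Adj (ord G X i) u ∧ cE G X s(ord G X i, u) = 0) ∧ u ∈ X)
        ∪ (univ.filter fun u => (G.Adj (ord G X i) u ∧ cE G X s(ord G X i, u) = 0) ∧ u ∉ X)) := by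
    ext u; by_cases hu : u ∈ X <;> simp [hu]
  have hdisj : Disjoint (univ.filter fun u => (G.Adj (ord G X i) u ∧ cE G X s(ord G X i, u) = 0) ∧ u ∈ X)
      (univ.filter fun u => (G.Adj (ord G X i) u ∧ cE G X s(ord G X i, u) = 0) ∧ u ∉ X) := by
    simp only [Finset.disjoint_left, mem_filter]
    rintro a ⟨-, -, ha⟩ ⟨-, -, hna⟩; exact hna ha
  rw [hsplit, card_union_of_disjoint hdisj]
  -- the part inside X
  have hA : (univ.filter fun u => (G.Adj (ord G X i) u ∧ cE G X s(ord G X i, u) = 0) ∧ u ∈ X)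
      = ((univ : Finset (Fin (mX X))).filter
          fun j : Fin (mX X) => j ≠ i ∧ (mX X) ≤ (i : ℕ) + (j : ℕ)).image (ord G X) := by
    ext u
    simp only [mem_filter, mem_univ, true_and, mem_image]
    constructor
    · rintro ⟨⟨hadj, hce⟩, huX⟩
      obtain ⟨j, rfl⟩ := ord_surj G X huX
      refine ⟨j, ⟨?_, ?_⟩, rfl⟩
      · rintro rfl; exact G.loopless.irrefl _ hadj
      · rw [cE_mk] at hce
        simp only [cEf, hxX, huX, if_true, pos_ord] at hce
        by_contra hlt
        rw [if_neg hlt] at hce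
        exact one_ne_zero hce
    · rintro ⟨j, ⟨hji, hsum⟩, rfl⟩
      have hne : (ord G X i) ≠ ord G X j := fun h => hji (ord_inj G X h.symm)
      refine ⟨⟨hclique hxX (ord_mem G X j) hne, ?_⟩, ord_mem G X j⟩
      rw [cE_mk]
      simp only [cEf, hxX, ord_mem G X j, if_true, pos_ord]
      rw [if_pos hsum]
  -- the part outside X
  have hB : (univ.filter fun u => (G.Adj (ord G X i) u ∧ cE G X s(ord G X i, u) = 0) ∧ u ∉ X)
      = if (mX X) ≤ 2 * (i : ℕ) then (univ.filter fun u => G.Adj (ord G X i) u ∧ u ∉ X) else ∅ := by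
    ext u
    simp only [mem_filter, mem_univ, true_and]
    by_cases ht : (mX X) ≤ 2 * (i : ℕ)
    · rw [if_pos ht]
      simp only [mem_filter, mem_univ, true_and]
      constructor
      · rintro ⟨⟨h1, -⟩, h3⟩; exact ⟨h1, h3⟩
      · rintro ⟨h1, h3⟩
        refine ⟨⟨h1, ?_⟩, h3⟩
        rw [cE_mk]
        simp only [cEf, hxX, h3, if_true, if_false, pos_ord]
        rw [if_pos ht]
    · rw [if_neg ht]
      simp only [Finset.notMem_empty, iff_false]
      rintro ⟨⟨h1, hce⟩, h3⟩
      rw [cE_mk] at hce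
      simp only [cEf, hxX, h3, if_true, if_false, pos_ord] at hce
      rw [if_neg ht] at hce
      exact one_ne_zero hce
  rw [hA, hB, card_image_of_injective _ (ord_inj G X), count_color0]
  have hcv : (if cV G X (ord G X i) = 0 then 1 else 0)
      = (if (mX X) ≤ 2 * (i : ℕ) then 1 else 0) := by
    have h10 : (1 : Fin 2) ≠ 0 := by decide
    by_cases ht : (mX X) ≤ 2 * (i : ℕ)
    · simp [cV, hxX, pos_ord, ht, show ¬ 2 * (i : ℕ) < (mX X) by omega]
    · simp [cV, hxX, pos_ord, ht, show 2 * (i : ℕ) < (mX X) by omega, h10]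
  rw [hcv]
  have hi := i.2
  by_cases ht : (mX X) ≤ 2 * (i : ℕ)
  · simp only [ht, if_true, apply_ite Finset.card, Finset.card_empty]
    have : (univ.filter fun u => G.Adj (ord G X i) u ∧ u ∉ X).card = gY G X (ord G X i) := rfl
    rw [this]
    omega
  · simp only [ht, if_false, Finset.card_empty]
    omega

lemma tdeg_ord1 (hclique : G.IsClique X) (i : Fin (mX X)) :
    totalDeg G (cV G X) (cE G X) 1 (ord G X i)
      = (mX X - (i : ℕ)) + (if 2 * (i : ℕ) < mX X then gY G X (ord G X i) else 0) := by
  classical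
  have hxX : ord G X i ∈ X := ord_mem G X i
  unfold totalDeg
  have hsplit : (univ.filter fun u => G.Adj (ord G X i) u ∧ cE G X s(ord G X i, u) = 1)
      = ((univ.filter fun u => (G.Adj (ord G X i) u ∧ cE G X s(ord G X i, u) = 1) ∧ u ∈ X)
        ∪ (univ.filter fun u => (G.Adj (ord G X i) u ∧ cE G X s(ord G X i, u) = 1) ∧ u ∉ X)) := by
    ext u; by_cases hu : u ∈ X <;> simp [hu]
  have hdisj : Disjoint (univ.filter fun u => (G.Adj (ord G X i) u ∧ cE G X s(ord G X i, u) = 1) ∧ u ∈ X)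
      (univ.filter fun u => (G.Adj (ord G X i) u ∧ cE G X s(ord G X i, u) = 1) ∧ u ∉ X) := by
    simp only [Finset.disjoint_left, mem_filter]
    rintro a ⟨-, -, ha⟩ ⟨-, -, hna⟩; exact hna ha
  rw [hsplit, card_union_of_disjoint hdisj]
  have hA : (univ.filter fun u => (G.Adj (ord G X i) u ∧ cE G X s(ord G X i, u) = 1) ∧ u ∈ X)
      = ((univ : Finset (Fin (mX X))).filter
          fun j : Fin (mX X) => j ≠ i ∧ ¬ (mX X) ≤ (i : ℕ) + (j : ℕ)).image (ord G X) := by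
    ext u
    simp only [mem_filter, mem_univ, true_and, mem_image]
    constructor
    · rintro ⟨⟨hadj, hce⟩, huX⟩
      obtain ⟨j, rfl⟩ := ord_surj G X huX
      refine ⟨j, ⟨?_, ?_⟩, rfl⟩
      · rintro rfl; exact G.loopless.irrefl _ hadj
      · rw [cE_mk] at hce
        simp only [cEf, hxX, huX, if_true, pos_ord] at hce
        intro hge
        rw [if_pos hge] at hce
        exact zero_ne_one hce
    · rintro ⟨j, ⟨hji, hsum⟩, rfl⟩
      have hne : (ord G X i) ≠ ord G X j := fun h => hji (ord_inj G X h.symm)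
      refine ⟨⟨hclique hxX (ord_mem G X j) hne, ?_⟩, ord_mem G X j⟩
      rw [cE_mk]
      simp only [cEf, hxX, ord_mem G X j, if_true, pos_ord]
      rw [if_neg hsum]
  have hB : (univ.filter fun u => (G.Adj (ord G X i) u ∧ cE G X s(ord G X i, u) = 1) ∧ u ∉ X)
      = if 2 * (i : ℕ) < (mX X) then (univ.filter fun u => G.Adj (ord G X i) u ∧ u ∉ X) else ∅ := by
    ext u
    simp only [mem_filter, mem_univ, true_and]
    by_cases ht : 2 * (i : ℕ) < (mX X)
    · rw [if_pos ht]
      simp only [mem_filter, mem_univ, true_and]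
      constructor
      · rintro ⟨⟨h1, -⟩, h3⟩; exact ⟨h1, h3⟩
      · rintro ⟨h1, h3⟩
        refine ⟨⟨h1, ?_⟩, h3⟩
        rw [cE_mk]
        simp only [cEf, hxX, h3, if_true, if_false, pos_ord]
        rw [if_neg (by omega)]
    · rw [if_neg ht]
      simp only [Finset.notMem_empty, iff_false]
      rintro ⟨⟨h1, hce⟩, h3⟩
      rw [cE_mk] at hce
      simp only [cEf, hxX, h3, if_true, if_false, pos_ord] at hce
      rw [if_pos (by omega)] at hce
      exact zero_ne_one hce
  rw [hA, hB, card_image_of_injective _ (ord_inj G X), count_color1]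
  have hcv : (if cV G X (ord G X i) = 1 then 1 else 0)
      = (if 2 * (i : ℕ) < (mX X) then 1 else 0) := by
    have h01 : (0 : Fin 2) ≠ 1 := by decide
    by_cases ht : 2 * (i : ℕ) < (mX X)
    · simp [cV, hxX, pos_ord, ht]
    · simp [cV, hxX, pos_ord, ht, h01]
  rw [hcv]
  have hi := i.2
  by_cases ht : 2 * (i : ℕ) < (mX X)
  · simp only [ht, if_true]
    have : (univ.filter fun u => G.Adj (ord G X i) u ∧ u ∉ X).card = gY G X (ord G X i) := rfl
    rw [this]
    omega
  · simp only [ht, if_false, Finset.card_empty]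
    omega

end TLIRSplit

namespace TLIRSplit

variable [Fintype V] (G : SimpleGraph V) (X : Set V)

lemma card_tail :
    ((XF X).filter fun u => mX X ≤ 2 * pos G X u).card = mX X / 2 := by
  rw [XF_eq_image G X, filter_image, card_image_of_injective _ (ord_inj G X)]
  have h : ((univ : Finset (Fin (mX X))).filter fun j => mX X ≤ 2 * pos G X (ord G X j))
      = ((univ : Finset (Fin (mX X))).filter
          fun j : Fin (mX X) => mX X - mX X / 2 ≤ (j : ℕ)) := by
    apply filter_congr; intro j _
    rw [pos_ord]
    have := j.2
    constructor <;> intro <;> omega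
  rw [h, card_fin_le]
  omega

lemma card_head :
    ((XF X).filter fun u => ¬ mX X ≤ 2 * pos G X u).card = mX X - mX X / 2 := by
  rw [XF_eq_image G X, filter_image, card_image_of_injective _ (ord_inj G X)]
  have h : ((univ : Finset (Fin (mX X))).filter fun j => ¬ mX X ≤ 2 * pos G X (ord G X j))
      = ((univ : Finset (Fin (mX X))).filter
          fun j : Fin (mX X) => (j : ℕ) < mX X - mX X / 2) := by
    apply filter_congr; intro j _
    rw [pos_ord]
    have := j.2
    constructor <;> intro <;> omega
  rw [h, card_fin_lt _ _ (by omega)]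

lemma tdeg_y0 (hindep : ∀ u ∈ Xᶜ, ∀ w ∈ Xᶜ, ¬ G.Adj u w) {y : V} (hy : y ∉ X) :
    totalDeg G (cV G X) (cE G X) 0 y ≤ mX X / 2 + mX X % 2 := by
  unfold totalDeg
  have hsub : (univ.filter fun u => G.Adj y u ∧ cE G X s(y, u) = 0)
      ⊆ (XF X).filter fun u => mX X ≤ 2 * pos G X u := by
    intro u hu
    simp only [mem_filter, mem_univ, true_and] at hu
    obtain ⟨hadj, hce⟩ := hu
    have huX : u ∈ X := by
      by_contra huX
      exact hindep y hy u huX hadj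
    rw [cE_mk] at hce
    simp only [cEf, hy, huX, if_false, if_true] at hce
    rw [mem_filter]
    refine ⟨(mem_XF X).2 huX, ?_⟩
    by_contra hlt
    rw [if_neg hlt] at hce
    exact one_ne_zero hce
  have h1 : (univ.filter fun u => G.Adj y u ∧ cE G X s(y, u) = 0).card ≤ mX X / 2 := by
    calc _ ≤ ((XF X).filter fun u => mX X ≤ 2 * pos G X u).card := card_le_card hsub
    _ = mX X / 2 := card_tail G X
  have h2 : (if cV G X y = 0 then 1 else 0) ≤ mX X % 2 := by
    by_cases hm : mX X % 2 = 0
    · simp [cV, hy, hm]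
    · simp [cV, hy, hm]
      omega
  omega

lemma tdeg_y1 (hindep : ∀ u ∈ Xᶜ, ∀ w ∈ Xᶜ, ¬ G.Adj u w) {y : V} (hy : y ∉ X) :
    totalDeg G (cV G X) (cE G X) 1 y ≤ mX X / 2 + 1 := by
  unfold totalDeg
  have hsub : (univ.filter fun u => G.Adj y u ∧ cE G X s(y, u) = 1)
      ⊆ (XF X).filter fun u => ¬ mX X ≤ 2 * pos G X u := by
    intro u hu
    simp only [mem_filter, mem_univ, true_and] at hu
    obtain ⟨hadj, hce⟩ := hu
    have huX : u ∈ X := by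
      by_contra huX
      exact hindep y hy u huX hadj
    rw [cE_mk] at hce
    simp only [cEf, hy, huX, if_false, if_true] at hce
    rw [mem_filter]
    refine ⟨(mem_XF X).2 huX, ?_⟩
    intro hge
    rw [if_pos hge] at hce
    exact zero_ne_one hce
  have h1 : (univ.filter fun u => G.Adj y u ∧ cE G X s(y, u) = 1).card
      ≤ mX X - mX X / 2 := by
    calc _ ≤ ((XF X).filter fun u => ¬ mX X ≤ 2 * pos G X u).card := card_le_card hsub
    _ = mX X - mX X / 2 := card_head G X
  have h2 : (if cV G X y = 1 then 1 else 0) ≤ 1 - mX X % 2 := by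
    by_cases hm : mX X % 2 = 0
    · have h1' : (1 : ℕ) - mX X % 2 = 1 := by omega
      rw [h1']
      split <;> norm_num
    · have : (if cV G X y = 1 then 1 else 0) = 0 := by
        simp [cV, hy, hm]
      omega
  omega

end TLIRSplit


open TLIRSplit in
/-- Every finite split graph (vertices can be partitioned into a clique
and an independent set) admits a locally irregular total coloring with 2 colors,
i.e. `tlir(G) ≤ 2`. -/
theorem stmt5 {V : Type*} [Fintype V] (G : SimpleGraph V) (X : Set V)
    (hclique : G.IsClique X)
    (hindep : ∀ u ∈ Xᶜ, ∀ w ∈ Xᶜ, ¬ G.Adj u w) : HasTLIR G 2 := by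

  classical
  refine ⟨cV G X, cE G X, ?_⟩
  intro u v hadj
  by_cases hu : u ∈ X <;> by_cases hv : v ∈ X
  · -- both endpoints in the clique
    obtain ⟨i, rfl⟩ := ord_surj G X hu
    obtain ⟨j, rfl⟩ := ord_surj G X hv
    have hij : (i : ℕ) ≠ (j : ℕ) := by
      intro h
      exact G.loopless.irrefl _ (by rwa [Fin.ext h] at hadj)
    have hcE : cE G X s(ord G X i, ord G X j)
        = if mX X ≤ (i : ℕ) + (j : ℕ) then 0 else 1 := by
      rw [cE_mk]
      simp [cEf, hu, hv, pos_ord]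
    have key0 : ∀ a b : Fin (mX X), (a : ℕ) < (b : ℕ) →
        totalDeg G (cV G X) (cE G X) 0 (ord G X a)
          < totalDeg G (cV G X) (cE G X) 0 (ord G X b) := by
      intro a b hab
      rw [tdeg_ord0 G X hclique a, tdeg_ord0 G X hclique b]
      by_cases h2a : mX X ≤ 2 * (a : ℕ)
      · have h2b : mX X ≤ 2 * (b : ℕ) := by omega
        have hg := gY_tail G X (le_of_lt hab) (by omega)
        simp only [h2a, h2b, if_true]
        omega
      · by_cases h2b : mX X ≤ 2 * (b : ℕ)
        · simp only [h2a, h2b, if_true, if_false]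
          omega
        · simp only [h2a, h2b, if_false]
          omega
    have key1 : ∀ a b : Fin (mX X), (a : ℕ) < (b : ℕ) →
        totalDeg G (cV G X) (cE G X) 1 (ord G X b)
          < totalDeg G (cV G X) (cE G X) 1 (ord G X a) := by
      intro a b hab
      rw [tdeg_ord1 G X hclique a, tdeg_ord1 G X hclique b]
      have hbm := b.2
      by_cases h2b : 2 * (b : ℕ) < mX X
      · have h2a : 2 * (a : ℕ) < mX X := by omega
        have hg := gY_head G X (le_of_lt hab) h2b
        simp only [h2a, h2b, if_true]
        omega
      · by_cases h2a : 2 * (a : ℕ) < mX X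
        · simp only [h2a, h2b, if_true, if_false]
          omega
        · simp only [h2a, h2b, if_false]
          omega
    rw [hcE]
    by_cases hc : mX X ≤ (i : ℕ) + (j : ℕ)
    · rw [if_pos hc]
      rcases hij.lt_or_gt with h | h
      · exact (key0 i j h).ne
      · exact (key0 j i h).ne'
    · rw [if_neg hc]
      rcases hij.lt_or_gt with h | h
      · exact (key1 i j h).ne'
      · exact (key1 j i h).ne
  · -- u in the clique, v outside
    obtain ⟨i, rfl⟩ := ord_surj G X hu
    have hcE : cE G X s(ord G X i, v)
        = if mX X ≤ 2 * (i : ℕ) then 0 else 1 := by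
      rw [cE_mk]
      simp [cEf, hu, hv, pos_ord]
    have hgY : 1 ≤ gY G X (ord G X i) := by
      apply card_pos.2
      exact ⟨v, by simp only [mem_filter, mem_univ, true_and]; exact ⟨hadj, hv⟩⟩
    have him := i.2
    rw [hcE]
    by_cases ht : mX X ≤ 2 * (i : ℕ)
    · rw [if_pos ht, tdeg_ord0 G X hclique i]
      have hyb := tdeg_y0 G X hindep hv
      simp only [ht, if_true]
      omega
    · rw [if_neg ht, tdeg_ord1 G X hclique i]
      have hyb := tdeg_y1 G X hindep hv
      simp only [show 2 * (i : ℕ) < mX X by omega, if_true]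
      omega
  · -- v in the clique, u outside
    obtain ⟨j, rfl⟩ := ord_surj G X hv
    have hcE : cE G X s(u, ord G X j)
        = if mX X ≤ 2 * (j : ℕ) then 0 else 1 := by
      rw [cE_mk]
      simp [cEf, hu, hv, pos_ord]
    have hgY : 1 ≤ gY G X (ord G X j) := by
      apply card_pos.2
      refine ⟨u, ?_⟩
      simp only [mem_filter, mem_univ, true_and]
      exact ⟨hadj.symm, hu⟩
    have hjm := j.2
    rw [hcE]
    by_cases ht : mX X ≤ 2 * (j : ℕ)
    · rw [if_pos ht, tdeg_ord0 G X hclique j]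
      have hyb := tdeg_y0 G X hindep hu
      simp only [ht, if_true]
      omega
    · rw [if_neg ht, tdeg_ord1 G X hclique j]
      have hyb := tdeg_y1 G X hindep hu
      simp only [show 2 * (j : ℕ) < mX X by omega, if_true]
      omega
  · exact absurd hadj (hindep u hu v hv)
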